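/- Let L ⊣_J R be a relative adjunction (J : A ⥤ E, L : A ⥤ C, R : C ⥤ E, with natural bijections ♯ : Hom(L.obj x, c) ≃ Hom(J.obj x, R.obj c)). Then the data T₀ x := R.obj (L.obj x), η_x := ♯(𝟙 (L.obj x)), and f† := R.map ((♯⁻¹ f)) for f : J.obj x ⟶ R.obj (L.obj y), forms a relative monad on J. -/
import Mathlib

open CategoryTheory CategoryTheory.Limits

universe v₁ v₂ v₃ v₄ v₅ u₁ u₂ u₃ u₄ u₅

/-- A relative adjunction `L ⊣_J R`: bijections `(L.obj x ⟶ c) ≃ (J.obj x ⟶ R.obj c)`,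
natural in `x` and `c`. -/
structure RelAdjCore {A : Type u₁} {E : Type u₂} {C : Type u₃}
    [Category.{v₁} A] [Category.{v₂} E] [Category.{v₃} C]
    (J : A ⥤ E) (L : A ⥤ C) (R : C ⥤ E) where
  equiv : ∀ (x : A) (c : C), (L.obj x ⟶ c) ≃ (J.obj x ⟶ R.obj c)
  nat_left : ∀ {x' x : A} (a : x' ⟶ x) {c : C} (g : L.obj x ⟶ c),
    equiv x' c (L.map a ≫ g) = J.map a ≫ equiv x c g
  nat_right : ∀ {x : A} {c c' : C} (g : L.obj x ⟶ c) (h : c ⟶ c'),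
    equiv x c' (g ≫ h) = equiv x c g ≫ R.map h

/-- Every relative adjunction `L ⊣_J R` induces a relative monad on `J` in
Kleisli-triple form: `T₀ x = R (L x)`, `η_x = ♯(𝟙)`, `f† = R.map (♯⁻¹ f)`. -/
theorem stmt4 {A : Type u₁} {E : Type u₂} {C : Type u₃}
    [Category.{v₁} A] [Category.{v₂} E] [Category.{v₃} C]
    (J : A ⥤ E) (L : A ⥤ C) (R : C ⥤ E) (adj : RelAdjCore J L R) :
    (∀ x : A,
      R.map ((adj.equiv x (L.obj x)).symm (adj.equiv x (L.obj x) (𝟙 (L.obj x)))) =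
        𝟙 (R.obj (L.obj x))) ∧
    (∀ (x y : A) (f : J.obj x ⟶ R.obj (L.obj y)),
      adj.equiv x (L.obj x) (𝟙 (L.obj x)) ≫ R.map ((adj.equiv x (L.obj y)).symm f) = f) ∧
    (∀ (x y z : A) (f : J.obj x ⟶ R.obj (L.obj y)) (g : J.obj y ⟶ R.obj (L.obj z)),
      R.map ((adj.equiv x (L.obj z)).symm (f ≫ R.map ((adj.equiv y (L.obj z)).symm g))) =
        R.map ((adj.equiv x (L.obj y)).symm f) ≫ R.map ((adj.equiv y (L.obj z)).symm g)) := by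
  refine ⟨fun x => by simp, fun x y f => ?_, fun x y z f g => ?_⟩
  · have h := adj.nat_right (𝟙 (L.obj x)) ((adj.equiv x (L.obj y)).symm f)
    rw [Category.id_comp, Equiv.apply_symm_apply] at h
    exact h.symm
  · have h : adj.equiv x (L.obj z)
        ((adj.equiv x (L.obj y)).symm f ≫ (adj.equiv y (L.obj z)).symm g) =
        f ≫ R.map ((adj.equiv y (L.obj z)).symm g) := by
      rw [adj.nat_right, Equiv.apply_symm_apply]
    rw [← h, Equiv.symm_apply_apply, R.map_comp]
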